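/- Under the hypotheses of Theorem 1 (u a non-trivial plane wave solution of *du = αi·du, L ≠ 0 a constant complex antisymmetric tensor with *L = α̃i L), the resulting connection is not flat: the Riemann curvature R_{κλμν}(x) = Re(L_{κλ}(du)_{μν}(x)) is not identically zero. -/
import Mathlib


noncomputable section
open Complex Finset

/-- The Minkowski metric `diag(+1,-1,-1,-1)` on `ℝ⁴`. -/
def gR (μ ν : Fin 4) : ℝ := if μ = ν then (if μ = (0 : Fin 4) then 1 else -1) else 0

/-- The value of an index as a real number. -/
def fv (a : Fin 4) : ℝ := (a : ℕ)

/-- The totally antisymmetric symbol `ε` with `ε₀₁₂₃ = +1`. -/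
def eps (a b c d : Fin 4) : ℝ :=
  ((fv b - fv a) * (fv c - fv a) * (fv d - fv a) *
    (fv c - fv b) * (fv d - fv b) * (fv d - fv c)) / 12

/-- The Hodge star of an antisymmetric rank-2 (lower-index) tensor:
`(*L)_{μν} = (1/2) L^{κλ} ε_{κλμν}`, indices raised with the Minkowski metric. -/
def hodge (L : Fin 4 → Fin 4 → ℂ) (μ ν : Fin 4) : ℂ :=
  (1/2) * ∑ κ : Fin 4, ∑ l : Fin 4, ((gR κ κ * gR l l * eps κ l μ ν : ℝ) : ℂ) * L κ l

/-- The partial derivative `∂_μ` of a function on Minkowski space `ℝ⁴`. -/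
def pd {E : Type*} [NormedAddCommGroup E] [NormedSpace ℝ E]
    (μ : Fin 4) (f : (Fin 4 → ℝ) → E) (x : Fin 4 → ℝ) : E :=
  fderiv ℝ f x (Pi.single μ 1)

/-- The exterior derivative of a complex vector field: `(du)_{μν} = ∂_μ u_ν − ∂_ν u_μ`. -/
def dEx (u : (Fin 4 → ℝ) → Fin 4 → ℂ) (x : Fin 4 → ℝ) (μ ν : Fin 4) : ℂ :=
  pd μ (fun y => u y ν) x - pd ν (fun y => u y μ) x

/-- `u` is a plane wave: `u(x) = w e^{−i k·x}` with constant `w` and constant real `k ≠ 0`. -/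
def IsPlaneWave (u : (Fin 4 → ℝ) → Fin 4 → ℂ) : Prop :=
  ∃ (w : Fin 4 → ℂ) (k : Fin 4 → ℝ), k ≠ 0 ∧
    ∀ x μ, u x μ = w μ * Complex.exp (-Complex.I * ∑ ρ : Fin 4, ((k ρ : ℂ) * (x ρ : ℂ)))

/-- The derivative of a plane-wave component. -/
lemma pw_pd (w : Fin 4 → ℂ) (k : Fin 4 → ℝ) (u : (Fin 4 → ℝ) → Fin 4 → ℂ)
    (hu : ∀ x μ, u x μ = w μ * Complex.exp (-Complex.I * ∑ ρ : Fin 4, ((k ρ : ℂ) * (x ρ : ℂ))))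
    (x : Fin 4 → ℝ) (μ ν : Fin 4) :
    pd μ (fun y => u y ν) x
      = w ν * Complex.exp (-Complex.I * ((∑ ρ : Fin 4, k ρ * x ρ : ℝ) : ℂ))
        * (-Complex.I * (k μ : ℝ)) := by
  set LIN : (Fin 4 → ℝ) →L[ℝ] ℂ :=
    Complex.ofRealCLM.comp
      (∑ ρ : Fin 4, (k ρ) • (ContinuousLinearMap.proj ρ : (Fin 4 → ℝ) →L[ℝ] ℝ)) with hLIN
  have hLINapp : ∀ y : Fin 4 → ℝ, LIN y = ((∑ ρ : Fin 4, k ρ * y ρ : ℝ) : ℂ) := by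
    intro y
    simp [hLIN, ContinuousLinearMap.sum_apply]
  have h1 : HasFDerivAt (fun y : Fin 4 → ℝ => ((∑ ρ : Fin 4, k ρ * y ρ : ℝ) : ℂ)) LIN x := by
    have hfun' : (fun y : Fin 4 → ℝ => ((∑ ρ : Fin 4, k ρ * y ρ : ℝ) : ℂ)) = ⇑LIN :=
      funext fun y => (hLINapp y).symm
    rw [hfun']
    exact LIN.hasFDerivAt
  have h2 := (h1.const_mul (-Complex.I)).cexp.const_mul (w ν)
  have hfun : (fun y => u y ν)
      = fun y : Fin 4 → ℝ =>
          w ν * Complex.exp (-Complex.I * ((∑ ρ : Fin 4, k ρ * y ρ : ℝ) : ℂ)) := by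
    funext y
    rw [hu y ν]
    push_cast
    ring_nf
  rw [pd, hfun, h2.fderiv]
  have hsingle : LIN (Pi.single μ 1) = ((k μ : ℝ) : ℂ) := by
    rw [hLINapp]
    norm_cast
    simp [Pi.single_apply, mul_ite]
  simp only [ContinuousLinearMap.smul_apply, hsingle, smul_eq_mul]
  ring

/-- under the hypotheses of Theorem 1 (`u` a non-trivial plane wave solution of
`*du = α i du`, `L ≠ 0` constant complex antisymmetric with `*L = α̃ i L`), the connection is
not flat: the Riemann curvature `R_{κλμν}(x) = Re(L_{κλ} (du)_{μν}(x))` is not identically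
zero. -/
theorem connection_not_flat (u : (Fin 4 → ℝ) → Fin 4 → ℂ)
    (hpw : IsPlaneWave u)
    (hnt : ¬ (∀ x μ ν, dEx u x μ ν = 0))
    (α : ℝ) (hα : α = 1 ∨ α = -1)
    (hpol : ∀ x μ ν, hodge (dEx u x) μ ν = (α : ℂ) * Complex.I * dEx u x μ ν)
    (L : Fin 4 → Fin 4 → ℂ) (hLne : L ≠ 0) (hLanti : ∀ μ ν, L μ ν = - L ν μ)
    (at' : ℝ) (hat : at' = 1 ∨ at' = -1)
    (hLpol : ∀ μ ν, hodge L μ ν = (at' : ℂ) * Complex.I * L μ ν) :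
    ¬ (∀ x κ lam μ ν, (L κ lam * dEx u x μ ν).re = 0) := by
  intro hflat
  obtain ⟨w, k, hk, hu⟩ := hpw
  -- explicit formula for dEx
  have hdEx : ∀ x μ ν, dEx u x μ ν
      = (-Complex.I * ((k μ : ℂ) * w ν - (k ν : ℂ) * w μ))
        * Complex.exp (-Complex.I * ((∑ ρ : Fin 4, k ρ * x ρ : ℝ) : ℂ)) := by
    intro x μ ν
    rw [dEx, pw_pd w k u hu, pw_pd w k u hu]
    ring
  -- nontrivial amplitude
  obtain ⟨x₀, μ₀, ν₀, hx₀⟩ : ∃ x μ ν, dEx u x μ ν ≠ 0 := by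
    by_contra h; push_neg at h
    exact hnt fun x μ ν => h x μ ν
  have hcne : (-Complex.I * ((k μ₀ : ℂ) * w ν₀ - (k ν₀ : ℂ) * w μ₀)) ≠ 0 := by
    intro h
    apply hx₀
    rw [hdEx, h, zero_mul]
  -- nonzero component of L
  obtain ⟨κ₀, lam₀, hL₀⟩ : ∃ κ lam, L κ lam ≠ 0 := by
    by_contra h; push_neg at h
    exact hLne (funext fun κ => funext fun lam => h κ lam)
  set z : ℂ := L κ₀ lam₀ * (-Complex.I * ((k μ₀ : ℂ) * w ν₀ - (k ν₀ : ℂ) * w μ₀)) with hz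
  have hzne : z ≠ 0 := mul_ne_zero hL₀ hcne
  -- the phase attains every real value
  obtain ⟨ρ₀, hkρ⟩ : ∃ ρ, k ρ ≠ 0 := by
    by_contra h; push_neg at h
    exact hk (funext h)
  have hphase : ∀ t : ℝ, ∃ x : Fin 4 → ℝ, (∑ ρ : Fin 4, k ρ * x ρ) = t := by
    intro t
    refine ⟨fun j => if j = ρ₀ then t / k ρ₀ else 0, ?_⟩
    rw [Finset.sum_eq_single ρ₀]
    · simp [mul_div_cancel₀, hkρ]
    · intro b _ hb; simp [hb]
    · simp
  -- hence Re (z * exp (-I t)) = 0 for all t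
  have hAll : ∀ t : ℝ, z.re * Real.cos t + z.im * Real.sin t = 0 := by
    intro t
    obtain ⟨x, hx⟩ := hphase t
    have h := hflat x κ₀ lam₀ μ₀ ν₀
    rw [hdEx, hx, ← mul_assoc, ← hz] at h
    have hre : (Complex.exp (-Complex.I * (t : ℂ))).re = Real.cos t := by
      simp [Complex.exp_re]
    have him : (Complex.exp (-Complex.I * (t : ℂ))).im = -Real.sin t := by
      simp [Complex.exp_im]
    rw [Complex.mul_re, hre, him] at h
    linarith
  have h0 := hAll 0
  have h1 := hAll (Real.pi / 2)
  simp [Real.cos_pi_div_two, Real.sin_pi_div_two] at h0 h1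
  exact hzne (Complex.ext h0 h1)
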